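/- Let k, n be integers with 3 ≤ k ≤ n and let S ⊆ [n]^{(k)} be nonempty. Then |δ_{k−2}^-(S)| / C(n, 2) ≥ (|S| / C(n, k))^{2/k}. -/

import Mathlib

/-- The set of all `r`-subsets of `Fin n` contained in some member of `S`
(for `S ⊆ [n]^{(k)}` and `r = k − ℓ`, this is the `ℓ`-th lower shadow `δ_ℓ^-(S)`). -/
def lowerShadow (n r : ℕ) (S : Finset (Finset (Fin n))) : Finset (Finset (Fin n)) :=
  Finset.univ.filter fun t => t.card = r ∧ ∃ A ∈ S, t ⊆ A

open Finset
open scoped FinsetFamily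

set_option maxHeartbeats 1600000

attribute [-instance] instDecidableEqFin

lemma prod_range_cast_sub (N k : ℕ) (h : k ≤ N) :
    ∏ i ∈ range k, ((N : ℝ) - i) = (k.factorial : ℝ) * N.choose k := by
  have h1 : ((N.descFactorial k : ℕ) : ℝ) = ∏ i ∈ range k, ((N : ℝ) - i) := by
    rw [Nat.descFactorial_eq_prod_range, Nat.cast_prod]
    exact Finset.prod_congr rfl fun i hi => by
      rw [Nat.cast_sub (le_of_lt (lt_of_lt_of_le (mem_range.1 hi) h))]
  rw [← h1, Nat.descFactorial_eq_factorial_mul_choose]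
  push_cast
  ring

lemma crux_step (c F G H a v x : ℝ) (IH : G + c*H ≤ F) (hc : 0 ≤ c)
    (hH0 : 0 ≤ H) (hG0 : 0 ≤ G) (hGH : (v+1)*H ≤ G)
    (hv : c + 1 ≤ v) (hva : v + 1 ≤ a) (hx1 : a < x) (hx2 : x ≤ a + 1)
    (hq : x * (x - 1) = a * (a - 1) + 2 * v) :
    G*((a-c)*(a-c-1)) + (c+2)*(H*((v-c+1)*(v-c))) ≤ F*((x-c)*(x-c-1)) := by
  have h1 : (a - c) * (a - c - 1) + 2*(v - c) ≤ (x - c) * (x - c - 1) := by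
    have e : (x - c) * (x - c - 1) = (a - c) * (a - c - 1) + 2*(v - c) + 2*c*(a + 1 - x) := by
      linear_combination hq
    nlinarith [e, mul_nonneg hc (show (0:ℝ) ≤ a + 1 - x by linarith)]
  have h2 : (v - c + 1) * (v - c) ≤ (a - c) * (a - c - 1) := by
    apply mul_le_mul (by linarith) (by linarith) (by linarith) (by linarith)
  have hA2B2 : (0:ℝ) ≤ (a - c) * (a - c - 1) + 2*(v - c) := by nlinarith [h2]
  have hbig : (G + c*H) * ((a - c) * (a - c - 1) + 2*(v-c)) ≤ F * ((x - c)*(x - c - 1)) := by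
    apply mul_le_mul IH h1 hA2B2 (by nlinarith [IH, hG0, hH0, mul_nonneg hc hH0])
  have e1 : (v+1)*H*(2*(v-c)) ≤ G*(2*(v-c)) :=
    mul_le_mul_of_nonneg_right hGH (by linarith)
  have e2 : c*H*((v - c + 1)*(v - c)) ≤ c*H*((a - c) * (a - c - 1)) :=
    mul_le_mul_of_nonneg_left h2 (mul_nonneg hc hH0)
  nlinarith [hbig, e1, e2,
    mul_nonneg (mul_nonneg hH0 (show (0:ℝ) ≤ v - c by linarith)) hc]

lemma crux : ∀ (k : ℕ), 2 ≤ k → ∀ (a v x : ℝ), (k : ℝ) - 1 ≤ v → v + 1 ≤ a → a < x → x ≤ a + 1 →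
    x * (x - 1) = a * (a - 1) + 2 * v →
    (∏ i ∈ range k, (a - i)) + k * ∏ i ∈ range (k - 1), (v - i) ≤ ∏ i ∈ range k, (x - i) := by
  intro k
  induction k using Nat.strong_induction_on with
  | _ k ih =>
    match k with
    | 0 => intro h; omega
    | 1 => intro h; omega
    | 2 =>
      intro _ a v x hv hva hx1 hx2 hq
      norm_num [prod_range_succ]
      linarith [hq]
    | 3 =>
      intro _ a v x hv hva hx1 hx2 hq
      norm_num [prod_range_succ]
      have hv2 : (2:ℝ) ≤ v := by push_cast at hv; linarith
      have ht0 : 0 < x - a := by linarith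
      have ht1 : x - a ≤ 1 := by linarith
      have h2v : 2 * v = (x - a) * (x + a - 1) := by linear_combination -hq
      have hx1a : 0 ≤ (x - a) * (a + 1 - x) := mul_nonneg ht0.le (by linarith)
      have hav : v ≤ a * (x - a) := by nlinarith
      have hmul : (a - 1) * v ≤ (a - 1) * (a * (x - a)) :=
        mul_le_mul_of_nonneg_left hav (by linarith)
      have key3 : 0 ≤ a * (a-1) * (x-a) + 2*v*(x-2) - 3*(v*(v-1)) := by
        nlinarith [mul_nonneg (show (0:ℝ) ≤ v by linarith) (show (0:ℝ) ≤ 3*(a-v) - 2 + 2*(x-a) by linarith),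
          mul_nonneg (show (0:ℝ) ≤ 2*v by linarith) (show (0:ℝ) ≤ x - a by linarith)]
      have hqq : x*(x-1)*(x-2) = (a*(a-1) + 2*v)*(x-2) := by linear_combination (x-2)*hq
      nlinarith [key3, hqq]
    | (j+4) =>
      intro _ a v x hv hva hx1 hx2 hq
      have hv' : (j:ℝ) + 3 ≤ v := by push_cast at hv; linarith
      have IH := ih (j+2) (by omega) (by omega) a v x (by push_cast; linarith) hva hx1 hx2 hq
      have hF : ∏ i ∈ range (j+4), (x - (i:ℝ)) =
          (∏ i ∈ range (j+2), (x - (i:ℝ))) * ((x - ((j:ℝ)+2)) * (x - ((j:ℝ)+2) - 1)) := by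
        rw [prod_range_succ, prod_range_succ]; push_cast; ring
      have hGa : ∏ i ∈ range (j+4), (a - (i:ℝ)) =
          (∏ i ∈ range (j+2), (a - (i:ℝ))) * ((a - ((j:ℝ)+2)) * (a - ((j:ℝ)+2) - 1)) := by
        rw [prod_range_succ, prod_range_succ]; push_cast; ring
      have hHa : ∏ i ∈ range (j+4-1), (v - (i:ℝ)) =
          (∏ i ∈ range (j+1), (v - (i:ℝ))) * ((v - ((j:ℝ)+2) + 1) * (v - ((j:ℝ)+2))) := by
        show ∏ i ∈ range (j+3), (v - (i:ℝ)) = _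
        rw [show j+3 = (j+1)+1+1 by ring, prod_range_succ, prod_range_succ]
        push_cast; ring
      have hH0 : (0:ℝ) ≤ ∏ i ∈ range (j+1), (v - (i:ℝ)) := by
        apply prod_nonneg; intro i hi
        have h' : (i:ℝ) ≤ (j:ℝ) := by exact_mod_cast Nat.lt_succ_iff.1 (mem_range.1 hi)
        linarith
      have hG0 : (0:ℝ) ≤ ∏ i ∈ range (j+2), (a - (i:ℝ)) := by
        apply prod_nonneg; intro i hi
        have h' : (i:ℝ) ≤ (j:ℝ) + 1 := by
          have := Nat.lt_succ_iff.1 (mem_range.1 hi); push_cast; exact_mod_cast this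
        linarith
      have hGH : (v+1) * ∏ i ∈ range (j+1), (v - (i:ℝ)) ≤ ∏ i ∈ range (j+2), (a - (i:ℝ)) := by
        have e : ∏ i ∈ range (j+2), (v + 1 - (i:ℝ)) =
            (v+1) * ∏ i ∈ range (j+1), (v - (i:ℝ)) := by
          rw [prod_range_succ']
          have : ∀ i ∈ range (j+1), (v + 1 - ((i+1:ℕ):ℝ)) = v - (i:ℝ) := by
            intro i _; push_cast; ring
          rw [prod_congr rfl this]; push_cast; ring
        rw [← e]
        apply prod_le_prod
        · intro i hi
          have h' : (i:ℝ) ≤ (j:ℝ) + 1 := by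
            have := Nat.lt_succ_iff.1 (mem_range.1 hi); exact_mod_cast this
          linarith
        · intro i hi; linarith
      have step := crux_step ((j:ℝ)+2) (∏ i ∈ range (j+2), (x - (i:ℝ)))
        (∏ i ∈ range (j+2), (a - (i:ℝ))) (∏ i ∈ range (j+1), (v - (i:ℝ)))
        a v x (by convert IH using 3 <;> push_cast <;> ring) (by positivity)
        hH0 hG0 hGH (by linarith) hva hx1 hx2 hq
      rw [hF, hGa, hHa]
      calc (∏ i ∈ range (j+2), (a - (i:ℝ))) * ((a - ((j:ℝ)+2)) * (a - ((j:ℝ)+2) - 1)) +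
            (↑(j+4):ℝ) * ((∏ i ∈ range (j+1), (v - (i:ℝ))) * ((v - ((j:ℝ)+2) + 1) * (v - ((j:ℝ)+2))))
          = (∏ i ∈ range (j+2), (a - (i:ℝ))) * ((a - ((j:ℝ)+2)) * (a - ((j:ℝ)+2) - 1)) +
            (((j:ℝ)+2)+2) * ((∏ i ∈ range (j+1), (v - (i:ℝ))) * ((v - ((j:ℝ)+2) + 1) * (v - ((j:ℝ)+2)))) := by
            push_cast; ring
        _ ≤ _ := step



lemma key (k n a v c m : ℕ) (hk3 : 3 ≤ k) (hkn : k ≤ n) (hkv : k - 1 ≤ v) (hva : v ≤ a)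
    (han : a + 1 ≤ n) (hc : c ≤ a.choose k + v.choose (k-1)) (hm : a.choose 2 + v ≤ m) :
    ((c:ℝ)/(n.choose k)) ^ ((2:ℝ)/k) ≤ (m:ℝ)/(n.choose 2) := by
  obtain ⟨K, rfl⟩ : ∃ K, k = K + 3 := ⟨k - 3, by omega⟩
  have hkv' : K + 2 ≤ v := by omega
  have hvR : ((K:ℝ)+2) ≤ (v:ℝ) := by exact_mod_cast hkv'
  have haR : (v:ℝ) ≤ (a:ℝ) := by exact_mod_cast hva
  have hnR : (a:ℝ) + 1 ≤ (n:ℝ) := by exact_mod_cast han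
  -- the interpolating real x
  set D : ℝ := (a:ℝ)*((a:ℝ)-1) + 2*(v:ℝ) with hD
  have hD0 : 0 ≤ 4*D + 1 := by nlinarith [hvR, haR]
  obtain ⟨x, hxq, hxa, hxa1⟩ : ∃ x:ℝ, x * (x - 1) = D ∧ (a:ℝ) < x ∧ x ≤ (a:ℝ) + 1 := by
    set s : ℝ := Real.sqrt (4*D + 1) with hs
    have hs0 : 0 ≤ s := Real.sqrt_nonneg _
    have hs2 : s^2 = 4*D + 1 := Real.sq_sqrt hD0
    refine ⟨(1 + s)/2, by linear_combination (1/4 : ℝ) * hs2, ?_, ?_⟩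
    · rcases lt_or_ge (a:ℝ) ((1 + s)/2) with h | h
      · exact h
      · exfalso
        have h1 : s ≤ 2*(a:ℝ) - 1 := by linarith
        have h2 : (0:ℝ) < v := by linarith
        nlinarith [hs2, h1, hs0]
    · rcases le_or_gt ((1 + s)/2) ((a:ℝ)+1) with h | h
      · exact h
      · exfalso
        have h1 : 2*(a:ℝ) + 1 < s := by linarith
        nlinarith [hs2, h1, hs0]
  -- main product bound
  have hprod : ((K+3).factorial : ℝ) * c ≤ ∏ i ∈ range (K+3), (x - (i:ℝ)) := by
    rcases eq_or_lt_of_le hva with rfl | hvlt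
    · -- v = a : x = a + 1 exactly
      have hxeq : x = (v:ℝ) + 1 := by
        have hfac : (x - ((v:ℝ)+1)) * (x + (v:ℝ)) = 0 := by
          rw [hD] at hxq; linear_combination hxq
        rcases mul_eq_zero.1 hfac with h | h
        · linarith
        · exfalso; nlinarith [hvR]
      have hcc : c ≤ (v+1).choose (K+3) := by
        have h1 : (v+1).choose (K+3) = v.choose (K+2) + v.choose (K+3) :=
          Nat.choose_succ_succ v (K+2)
        have h2 : K+3-1 = K+2 := by omega
        rw [h2] at hc
        omega
      calc ((K+3).factorial : ℝ) * c ≤ ((K+3).factorial : ℝ) * ((v+1).choose (K+3)) := by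
            have : (c:ℝ) ≤ ((v+1).choose (K+3) : ℝ) := by exact_mod_cast hcc
            apply mul_le_mul_of_nonneg_left this (by positivity)
        _ = ∏ i ∈ range (K+3), (((v+1:ℕ):ℝ) - (i:ℝ)) :=
            (prod_range_cast_sub (v+1) (K+3) (by omega)).symm
        _ = ∏ i ∈ range (K+3), (x - (i:ℝ)) := by
            apply prod_congr rfl; intro i _; rw [hxeq]; push_cast; ring
    · -- v < a : use crux
      have hcx := crux (K+3) (by omega) (a:ℝ) (v:ℝ) x (by push_cast; linarith)
        (by exact_mod_cast Nat.succ_le_of_lt hvlt) hxa hxa1 (by rw [hxq, hD])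
      have e1 : ∏ i ∈ range (K+3), ((a:ℝ) - i) = ((K+3).factorial : ℝ) * (a.choose (K+3)) :=
        prod_range_cast_sub a (K+3) (by omega)
      have e2 : ∏ i ∈ range (K+3-1), ((v:ℝ) - i) = ((K+2).factorial : ℝ) * (v.choose (K+2)) := by
        show ∏ i ∈ range (K+2), ((v:ℝ) - i) = _
        exact prod_range_cast_sub v (K+2) (by omega)
      have hcR : (c:ℝ) ≤ (a.choose (K+3) : ℝ) + (v.choose (K+2) : ℝ) := by
        have : c ≤ a.choose (K+3) + v.choose (K+2) := by
          simpa using hc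
        exact_mod_cast this
      have hfs : ((K+3).factorial : ℝ) = ((K+3):ℝ) * ((K+2).factorial : ℝ) := by
        rw [Nat.factorial_succ]; push_cast; ring
      calc ((K+3).factorial : ℝ) * c
          ≤ ((K+3).factorial : ℝ) * ((a.choose (K+3) : ℝ) + (v.choose (K+2) : ℝ)) :=
            mul_le_mul_of_nonneg_left hcR (by positivity)
        _ = (∏ i ∈ range (K+3), ((a:ℝ) - i)) + (K+3:ℕ) * ∏ i ∈ range (K+3-1), ((v:ℝ) - i) := by
            rw [e1, e2, hfs]; push_cast; ring
        _ ≤ ∏ i ∈ range (K+3), (x - (i:ℝ)) := hcx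
  -- final ratio argument
  have hnK : (0:ℝ) < (n.choose (K+3) : ℝ) := by
    exact_mod_cast Nat.choose_pos (show K+3 ≤ n by omega)
  have hn2 : (0:ℝ) < (n.choose 2 : ℝ) := by
    exact_mod_cast Nat.choose_pos (show 2 ≤ n by omega)
  have hn0 : (0:ℝ) < (n:ℝ) := by
    have : 0 < n := by omega
    exact_mod_cast this
  have hn1 : (0:ℝ) < (n:ℝ) - 1 := by linarith
  have hxn : x ≤ (n:ℝ) := by linarith
  have hx2 : (2:ℝ) ≤ x := by linarith
  have hxpos : ∀ i ∈ range (K+3), (0:ℝ) < x - i := by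
    intro i hi
    have : (i:ℝ) ≤ (K:ℝ) + 2 := by exact_mod_cast Nat.lt_succ_iff.1 (mem_range.1 hi)
    linarith
  have hnpos : ∀ i ∈ range (K+3), (0:ℝ) < (n:ℝ) - i := by
    intro i hi
    have : (i:ℝ) ≤ (K:ℝ) + 2 := by exact_mod_cast Nat.lt_succ_iff.1 (mem_range.1 hi)
    linarith
  set pr := ∏ i ∈ range (K+3), ((x - i)/((n:ℝ) - i)) with hprdef
  have hprsplit : ∏ i ∈ range (K+3), (x - (i:ℝ)) = pr * ∏ i ∈ range (K+3), ((n:ℝ) - i) := by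
    have hne : ∏ i ∈ range (K+3), ((n:ℝ) - i) ≠ 0 := ne_of_gt (prod_pos hnpos)
    rw [hprdef, prod_div_distrib, div_mul_cancel₀ _ hne]
  have hpr0 : 0 ≤ pr :=
    le_of_lt (prod_pos fun i hi => div_pos (hxpos i hi) (hnpos i hi))
  have hu : (c:ℝ)/(n.choose (K+3)) ≤ pr := by
    rw [div_le_iff₀ hnK]
    have hf : (0:ℝ) < ((K+3).factorial : ℝ) := by positivity
    have h1 : ((K+3).factorial:ℝ) * c ≤ ((K+3).factorial:ℝ) * (pr * (n.choose (K+3))) := by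
      calc ((K+3).factorial:ℝ) * c ≤ ∏ i ∈ range (K+3), (x - (i:ℝ)) := hprod
        _ = pr * ∏ i ∈ range (K+3), ((n:ℝ) - i) := hprsplit
        _ = pr * (((K+3).factorial:ℝ) * (n.choose (K+3))) := by
            rw [prod_range_cast_sub n (K+3) (by omega)]
        _ = ((K+3).factorial:ℝ) * (pr * (n.choose (K+3))) := by ring
    exact le_of_mul_le_mul_left h1 hf
  set r0 := x/(n:ℝ) with hr0def
  set r1 := (x-1)/((n:ℝ)-1) with hr1def
  have hr10 : 0 ≤ r1 := div_nonneg (by linarith) (by linarith)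
  have hr00 : 0 ≤ r0 := div_nonneg (by linarith) (by linarith)
  have hr1r0 : r1 ≤ r0 := by
    rw [hr0def, hr1def, div_le_div_iff₀ hn1 hn0]
    nlinarith [hxn]
  have hbound : pr ≤ r1^(K+2) * r0 := by
    rw [hprdef, prod_range_succ']
    have h0 : (x - ((0:ℕ):ℝ))/((n:ℝ) - ((0:ℕ):ℝ)) = r0 := by norm_num [hr0def]
    rw [h0]
    apply mul_le_mul_of_nonneg_right _ hr00
    calc ∏ i ∈ range (K+2), ((x - ((i+1:ℕ):ℝ))/((n:ℝ) - ((i+1:ℕ):ℝ)))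
        ≤ ∏ _i ∈ range (K+2), r1 := by
          apply prod_le_prod
          · intro i hi
            have him : i + 1 ∈ range (K+3) := by
              rw [mem_range] at hi ⊢; omega
            exact le_of_lt (div_pos (hxpos _ him) (hnpos _ him))
          · intro i hi
            have him : i + 1 ∈ range (K+3) := by
              rw [mem_range] at hi ⊢; omega
            have hd : (0:ℝ) < (n:ℝ) - ((i+1:ℕ):ℝ) := hnpos _ him
            rw [hr1def, div_le_div_iff₀ hd hn1]
            have hi0 : (0:ℝ) ≤ (i:ℝ) := Nat.cast_nonneg i
            have := mul_le_mul_of_nonneg_left hxn hi0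
            push_cast
            nlinarith [this]
      _ = r1^(K+2) := by rw [prod_const, card_range]
  clear_value pr r0 r1
  have hsq : pr^2 ≤ (r0*r1)^(K+3) := by
    have hb2 : pr^2 ≤ (r1^(K+2)*r0)^2 := pow_le_pow_left₀ hpr0 hbound 2
    have hpw : r1^(K+1) ≤ r0^(K+1) := pow_le_pow_left₀ hr10 hr1r0 (K+1)
    calc pr^2 ≤ (r1^(K+2)*r0)^2 := hb2
      _ = r1^(K+1) * (r0^2 * r1^(K+3)) := by ring
      _ ≤ r0^(K+1) * (r0^2 * r1^(K+3)) := by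
          apply mul_le_mul_of_nonneg_right hpw
          exact mul_nonneg (by positivity) (pow_nonneg hr10 _)
      _ = (r0*r1)^(K+3) := by ring
  have hP : (0:ℝ) < (n:ℝ)*((n:ℝ)-1) := mul_pos hn0 hn1
  have hr0r1m : r0*r1 ≤ (m:ℝ)/(n.choose 2) := by
    have e : r0*r1 = (x*(x-1))/((n:ℝ)*((n:ℝ)-1)) := by
      rw [hr0def, hr1def, div_mul_div_comm]
    have hm' : (a:ℝ)*((a:ℝ)-1) + 2*(v:ℝ) ≤ 2*(m:ℝ) := by
      have h1 : ((a.choose 2 : ℕ):ℝ) + (v:ℝ) ≤ (m:ℝ) := by exact_mod_cast hm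
      rw [Nat.cast_choose_two] at h1
      linarith
    rw [e, hxq, hD, Nat.cast_choose_two, div_le_div_iff₀ hP (by positivity)]
    nlinarith [mul_le_mul_of_nonneg_right hm' hP.le]
  have hr0r10 : 0 ≤ r0*r1 := mul_nonneg hr00 hr10
  set w := (m:ℝ)/(n.choose 2) with hwdef
  have hw0 : 0 ≤ w := div_nonneg (Nat.cast_nonneg _) hn2.le
  set u := (c:ℝ)/(n.choose (K+3)) with hudef
  have hu0 : 0 ≤ u := div_nonneg (Nat.cast_nonneg _) hnK.le
  clear_value u w
  have hu2 : u^2 ≤ w^(K+3) := by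
    calc u^2 ≤ pr^2 := pow_le_pow_left₀ hu0 hu 2
      _ ≤ (r0*r1)^(K+3) := hsq
      _ ≤ w^(K+3) := pow_le_pow_left₀ hr0r10 hr0r1m _
  have hKpos : (0:ℝ) < ((K+3:ℕ):ℝ) := by positivity
  have h2k : (2:ℝ)/(((K+3:ℕ)):ℝ) = 2 * ((((K+3:ℕ)):ℝ))⁻¹ := div_eq_mul_inv _ _
  rw [h2k, Real.rpow_mul hu0]
  rw [show (2:ℝ) = ((2:ℕ):ℝ) by norm_num, Real.rpow_natCast]
  calc (u^2) ^ ((((K+3:ℕ)):ℝ))⁻¹ ≤ (w^(K+3)) ^ ((((K+3:ℕ)):ℝ))⁻¹ := by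
        apply Real.rpow_le_rpow (by positivity) hu2 (by positivity)
    _ = w := by
        rw [← Real.rpow_natCast w (K+3), ← Real.rpow_mul hw0,
          mul_inv_cancel₀ (ne_of_gt hKpos), Real.rpow_one]

-- bottom-m lower subset of any finset in a linear order
lemma exists_bottom {β : Type*} [LinearOrder β] (A : Finset β) :
    ∀ m, m ≤ A.card → ∃ B, B ⊆ A ∧ B.card = m ∧ ∀ x ∈ B, ∀ y ∈ A, y ≤ x → y ∈ B := by
  intro m
  induction m with
  | zero => intro _; exact ⟨∅, empty_subset _, card_empty, by simp⟩
  | succ m ih =>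
    intro hm
    obtain ⟨B, hBA, hBcard, hlow⟩ := ih (by omega)
    have hne : (A \ B).Nonempty := by
      rw [← card_pos, card_sdiff_of_subset hBA]; omega
    set y := (A \ B).min' hne with hy
    have hyA : y ∈ A := (mem_sdiff.1 ((A \ B).min'_mem hne)).1
    have hyB : y ∉ B := (mem_sdiff.1 ((A \ B).min'_mem hne)).2
    refine ⟨insert y B, insert_subset hyA hBA, by rw [card_insert_of_notMem hyB, hBcard], ?_⟩
    intro x hx z hz hzx
    rcases mem_insert.1 hx with rfl | hxB
    · by_cases hzB : z ∈ B
      · exact mem_insert_of_mem hzB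
      · have : y ≤ z := min'_le _ _ (mem_sdiff.2 ⟨hz, hzB⟩)
        have : z = y := le_antisymm hzx this
        rw [this]; exact mem_insert_self _ _
    · exact mem_insert_of_mem (hlow x hxB z hz hzx)

-- an initial segment of colex of any prescribed size
lemma exists_initseg_card (n k m : ℕ) (hm : m ≤ n.choose k) :
    ∃ 𝒞 : Finset (Finset (Fin n)), Finset.Colex.IsInitSeg 𝒞 k ∧ 𝒞.card = m := by
  classical
  set A : Finset (Colex (Finset (Fin n))) :=
    ((Finset.univ : Finset (Fin n)).powersetCard k).image toColex with hA
  have hcardA : A.card = n.choose k := by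
    rw [hA, card_image_of_injective _ toColex.injective, card_powersetCard,
      card_univ, Fintype.card_fin]
  obtain ⟨B, hBA, hBcard, hlow⟩ := exists_bottom A m (by omega)
  refine ⟨B.image ofColex, ⟨?_, ?_⟩, ?_⟩
  · -- sized
    intro t ht
    simp only [coe_image, Set.mem_image, mem_coe] at ht
    obtain ⟨b, hb, rfl⟩ := ht
    have := hBA hb
    rw [hA, mem_image] at this
    obtain ⟨s, hs, rfl⟩ := this
    exact (mem_powersetCard.1 hs).2
  · -- downward closed
    intro s t hs hts
    have hsB : toColex s ∈ B := by
      rw [mem_image] at hs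
      obtain ⟨b, hb, rfl⟩ := hs
      simpa using hb
    have htA : toColex t ∈ A := by
      rw [hA, mem_image]
      exact ⟨t, mem_powersetCard.2 ⟨subset_univ _, hts.2⟩, rfl⟩
    have := hlow _ hsB _ htA (le_of_lt hts.1)
    rw [mem_image]
    exact ⟨toColex t, this, rfl⟩
  · rw [card_image_of_injective _ ofColex.injective, hBcard]

lemma mem_iter_shadow {n k : ℕ} (hk : 2 ≤ k) (𝒜 : Finset (Finset (Fin n)))
    (h𝒜 : ∀ A ∈ 𝒜, A.card = k) (t : Finset (Fin n)) :
    t ∈ ∂^[k-2] 𝒜 ↔ t.card = 2 ∧ ∃ A ∈ 𝒜, t ⊆ A := by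
  rw [mem_shadow_iterate_iff_exists_sdiff]
  constructor
  · rintro ⟨A, hA, hsub, hcard⟩
    have h1 : (A \ t).card = A.card - t.card := card_sdiff_of_subset hsub
    have h2 : t.card ≤ A.card := card_le_card hsub
    have h3 := h𝒜 A hA
    exact ⟨by omega, A, hA, hsub⟩
  · rintro ⟨ht2, A, hA, hsub⟩
    refine ⟨A, hA, hsub, ?_⟩
    rw [card_sdiff_of_subset hsub, h𝒜 A hA, ht2]

lemma initSeg_decomp (n k : ℕ) (hk : 3 ≤ k) (s₀ : Finset (Fin n)) (hs₀ : s₀.card = k) :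
    ∃ a v : ℕ, k - 1 ≤ v ∧ v ≤ a ∧ a + 1 ≤ n ∧
      (Finset.Colex.initSeg s₀).card ≤ a.choose k + v.choose (k-1) ∧
      a.choose 2 + v ≤ (∂^[k-2] (Finset.Colex.initSeg s₀)).card := by
  classical
  have hne : s₀.Nonempty := card_pos.1 (by omega)
  set aF := s₀.max' hne with haF
  have haFs₀ : aF ∈ s₀ := s₀.max'_mem hne
  have hsized : ∀ t ∈ Finset.Colex.initSeg s₀, t.card = k := by
    intro t ht
    have h := (Finset.Colex.mem_initSeg.1 ht).1
    omega
  have hmem : ∀ t ∈ Finset.Colex.initSeg s₀, ∀ u ∈ t, u ≤ aF := by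
    intro t ht
    exact Finset.Colex.forall_le_mono (Finset.Colex.mem_initSeg.1 ht).2
      (fun b hb => s₀.le_max' b hb)
  set A : Finset (Finset (Fin n)) := (Finset.Colex.initSeg s₀).filter (fun t => aF ∉ t) with hA
  set B : Finset (Finset (Fin n)) := (Finset.Colex.initSeg s₀).filter (fun t => aF ∈ t) with hB
  have hsplit : A.card + B.card = (Finset.Colex.initSeg s₀).card := by
    classical
    rw [hA, hB, add_comm]
    exact card_filter_add_card_filter_not (fun t => aF ∈ t)
  have hAsub : A ⊆ (Finset.Iio aF).powersetCard k := by
    intro t ht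
    rw [hA, mem_filter] at ht
    refine mem_powersetCard.2 ⟨fun u hu => ?_, hsized t ht.1⟩
    rw [mem_Iio]
    exact lt_of_le_of_ne (hmem t ht.1 u hu) (fun h => ht.2 (h ▸ hu))
  have hAcard : A.card ≤ ((aF : ℕ)).choose k := by
    have := card_le_card hAsub
    rwa [card_powersetCard, Fin.card_Iio] at this
  set W : Finset (Fin n) := B.sup (fun t => t.erase aF) with hW
  set v : ℕ := W.card with hv
  have hWIio : W ⊆ Finset.Iio aF := by
    intro u hu
    obtain ⟨t, ht, hut⟩ := Finset.mem_sup.1 (hW ▸ hu)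
    rw [hB, mem_filter] at ht
    rw [mem_Iio]
    exact lt_of_le_of_ne (hmem t ht.1 u (mem_of_mem_erase hut)) (ne_of_mem_erase hut)
  have hvA : v ≤ (aF : ℕ) := by
    have := card_le_card hWIio
    rwa [Fin.card_Iio] at this
  have hs₀B : s₀ ∈ B := by
    rw [hB, mem_filter]
    exact ⟨Finset.Colex.mem_initSeg_self, haFs₀⟩
  have hvk : k - 1 ≤ v := by
    have hsub : s₀.erase aF ⊆ W := by
      intro u hu
      rw [hW]
      exact Finset.mem_sup.2 ⟨s₀, hs₀B, hu⟩
    have := card_le_card hsub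
    rwa [card_erase_of_mem haFs₀, hs₀] at this
  have hBcard : B.card ≤ v.choose (k-1) := by
    have hinj : Set.InjOn (fun t : Finset (Fin n) => t.erase aF) (B : Set (Finset (Fin n))) := by
      intro t1 h1 t2 h2 he
      simp only [mem_coe, hB, mem_filter] at h1 h2
      have he' : t1.erase aF = t2.erase aF := he
      rw [← insert_erase h1.2, he', insert_erase h2.2]
    have himg : B.image (fun t => t.erase aF) ⊆ W.powersetCard (k-1) := by
      intro e he
      rw [mem_image] at he
      obtain ⟨t, ht, rfl⟩ := he
      have htB := ht
      rw [hB, mem_filter] at htB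
      refine mem_powersetCard.2 ⟨?_, ?_⟩
      · intro z hz
        rw [hW]
        exact Finset.mem_sup.2 ⟨t, ht, hz⟩
      · rw [card_erase_of_mem htB.2, hsized t htB.1]
    calc B.card = (B.image (fun t => t.erase aF)).card := (card_image_of_injOn hinj).symm
      _ ≤ (W.powersetCard (k-1)).card := card_le_card himg
      _ = v.choose (k-1) := by rw [card_powersetCard]
  -- shadow lower bound
  set 𝒟 := ∂^[k-2] (Finset.Colex.initSeg s₀) with h𝒟
  have hmem𝒟 : ∀ t, t ∈ 𝒟 ↔ t.card = 2 ∧ ∃ C ∈ Finset.Colex.initSeg s₀, t ⊆ C :=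
    mem_iter_shadow (by omega) _ hsized
  set P1 : Finset (Finset (Fin n)) := (Finset.Iio aF).powersetCard 2 with hP1
  set P2 : Finset (Finset (Fin n)) := W.image (fun u => ({u, aF} : Finset (Fin n))) with hP2
  have hP1sub : P1 ⊆ 𝒟 := by
    intro p hp
    rw [hP1, mem_powersetCard] at hp
    obtain ⟨hpsub, hp2⟩ := hp
    rw [hmem𝒟]
    refine ⟨hp2, ?_⟩
    rcases le_or_gt k (aF : ℕ) with hcase | hcase
    · obtain ⟨t, hpt, htIio, htcard⟩ :=
        exists_subsuperset_card_eq (n := k) hpsub (by omega) (by rwa [Fin.card_Iio])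
      refine ⟨t, ?_, hpt⟩
      rw [Finset.Colex.mem_initSeg]
      have haFt : aF ∉ t := fun h => absurd (mem_Iio.1 (htIio h)) (lt_irrefl aF)
      constructor
      · omega
      · refine le_of_lt (Finset.Colex.toColex_lt_toColex.2 ⟨?_, ?_⟩)
        · exact fun h => haFt (h ▸ haFs₀)
        · intro c hc _
          exact ⟨aF, haFs₀, haFt, le_of_lt (mem_Iio.1 (htIio hc))⟩
    · have hIioE : Finset.Iio aF = s₀.erase aF := by
        apply (eq_of_subset_of_card_le ?_ ?_).symm
        · intro u hu
          rw [mem_Iio]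
          exact lt_of_le_of_ne (s₀.le_max' u (mem_of_mem_erase hu)) (ne_of_mem_erase hu)
        · rw [card_erase_of_mem haFs₀, hs₀, Fin.card_Iio]; omega
      refine ⟨s₀, Finset.Colex.mem_initSeg_self, ?_⟩
      intro u hu
      exact mem_of_mem_erase (hIioE ▸ hpsub hu)
  have hP2sub : P2 ⊆ 𝒟 := by
    intro p hp
    rw [hP2, mem_image] at hp
    obtain ⟨u, hu, rfl⟩ := hp
    have huaF : u < aF := mem_Iio.1 (hWIio hu)
    rw [hmem𝒟]
    obtain ⟨t, htB, hut⟩ := (Finset.mem_sup).1 (hW ▸ hu)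
    have htB' := htB
    rw [hB, mem_filter] at htB'
    refine ⟨card_pair (ne_of_lt huaF), t, htB'.1, ?_⟩
    intro z hz
    rcases mem_insert.1 hz with rfl | hz'
    · exact mem_of_mem_erase hut
    · rw [mem_singleton.1 hz']; exact htB'.2
  have hP2card : P2.card = v := by
    rw [hP2]
    rw [card_image_of_injOn, hv]
    intro u1 h1 u2 h2 he
    have h1' : u1 < aF := mem_Iio.1 (hWIio h1)
    have he' : ({u1, aF} : Finset (Fin n)) = {u2, aF} := he
    have : u1 ∈ ({u2, aF} : Finset (Fin n)) := by rw [← he']; exact mem_insert_self _ _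
    rcases mem_insert.1 this with h | h
    · exact h
    · exact absurd (mem_singleton.1 h) (ne_of_lt h1')
  have hdisj : Disjoint P1 P2 := by
    rw [disjoint_left]
    intro p hp1 hp2
    rw [hP1, mem_powersetCard] at hp1
    rw [hP2, mem_image] at hp2
    obtain ⟨u, _, rfl⟩ := hp2
    have : aF ∈ ({u, aF} : Finset (Fin n)) := mem_insert_of_mem (mem_singleton_self _)
    exact absurd (mem_Iio.1 (hp1.1 this)) (lt_irrefl aF)
  have hcard𝒟 : ((aF:ℕ)).choose 2 + v ≤ 𝒟.card := by
    have hsub : P1 ∪ P2 ⊆ 𝒟 := union_subset hP1sub hP2sub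
    have := card_le_card hsub
    rwa [card_union_of_disjoint hdisj, hP2card,
      show P1.card = ((aF:ℕ)).choose 2 by rw [hP1, card_powersetCard, Fin.card_Iio]] at this
  exact ⟨(aF : ℕ), v, hvk, hvA, aF.isLt, by omega, hcard𝒟⟩

/-- **Normalized lower-shadow inequality (used in Case 3 of Lemma 8 of the paper).**
For `3 ≤ k ≤ n` and nonempty `S ⊆ [n]^{(k)}`,
`|δ_{k−2}^-(S)| / C(n,2) ≥ (|S| / C(n,k))^{2/k}`. -/
theorem lower_shadow_power_bound (k n : ℕ) (hk : 3 ≤ k) (hkn : k ≤ n)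
    (S : Finset (Finset (Fin n))) (hS : ∀ A ∈ S, A.card = k) (hne : S.Nonempty) :
    ((S.card : ℝ) / (Nat.choose n k : ℝ)) ^ ((2 : ℝ) / (k : ℝ))
      ≤ ((lowerShadow n 2 S).card : ℝ) / (Nat.choose n 2 : ℝ) := by
  classical
  have hone : 1 ≤ S.card := hne.card_pos
  have hSle : S.card ≤ n.choose k := by
    have hsub : S ⊆ (Finset.univ : Finset (Fin n)).powersetCard k := fun A hA =>
      mem_powersetCard.2 ⟨subset_univ _, hS A hA⟩
    have := card_le_card hsub
    rwa [card_powersetCard, card_univ, Fintype.card_fin] at this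
  obtain ⟨𝒞, hinit, hccard⟩ := exists_initseg_card n k S.card hSle
  have h𝒞ne : 𝒞.Nonempty := card_pos.1 (by omega)
  obtain ⟨s₀, hs₀k, rfl⟩ := hinit.exists_initSeg h𝒞ne
  obtain ⟨a, v, hvk, hva, han, hsize, hshadow⟩ := initSeg_decomp n k hk s₀ hs₀k
  have hkk : (∂^[k-2] (Finset.Colex.initSeg s₀)).card ≤ (∂^[k-2] S).card := by
    refine Finset.iterated_kk (fun A hA => hS A hA) (le_of_eq hccard) ?_
    rw [← hs₀k]
    exact Finset.Colex.isInitSeg_initSeg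
  have hls : lowerShadow n 2 S = ∂^[k-2] S := by
    ext t
    rw [mem_iter_shadow (show 2 ≤ k by omega) S hS t]
    simp only [lowerShadow, mem_filter, mem_univ, true_and]
  rw [hls]
  exact key k n a v S.card ((∂^[k-2] S).card) hk hkn hvk hva han (by omega) (by omega)
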